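/- arXiv:2010.07072 — 5 statements merged into one kernel-verified Lean document; each statement's English description precedes it below -/
import Mathlib

section
/- For all t, t' ∈ [0,1], the series Σ_{k=1}^∞ 2 sin(πkt) sin(πkt') / (π²k²) converges and equals min(t,t') − t t'. -/
open Real

lemma b2eval (x : ℝ) : (Polynomial.map (algebraMap ℚ ℝ) (Polynomial.bernoulli 2)).eval x = x^2 - x + 1/6 := by
  simp [Polynomial.bernoulli, Finset.sum_range_succ,
    bernoulli_eq_bernoulli'_of_ne_one (by norm_num : (2:ℕ) ≠ 1), bernoulli'_two]
  ring

lemma cos_hasSum {x : ℝ} (hx : x ∈ Set.Icc (0:ℝ) 1) :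
    HasSum (fun n : ℕ => Real.cos (2*π*((n:ℝ)+1)*x) / ((n:ℝ)+1)^2) (π^2*(x^2 - x + 1/6)) := by
  have h := hasSum_one_div_nat_pow_mul_cos (k := 1) one_ne_zero hx
  rw [b2eval] at h
  have h2 := (hasSum_nat_add_iff' (f := fun n : ℕ => 1 / (n : ℝ) ^ (2*1) * Real.cos (2 * π * n * x)) 1).mpr h
  simp only [Finset.range_one, Finset.sum_singleton, Nat.cast_zero] at h2
  push_cast at h2
  have hf : (fun n : ℕ => Real.cos (2*π*((n:ℝ)+1)*x) / ((n:ℝ)+1)^2)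
      = fun n : ℕ => 1 / ((n:ℝ)+1) ^ (2*1) * Real.cos (2 * π * ((n:ℝ)+1) * x) := by
    funext n
    push_cast
    ring_nf
  rw [hf]
  convert h2 using 1
  · rfl
  have : ((2*1).factorial : ℝ) = 2 := by norm_num [Nat.factorial]
  rw [this]
  ring

lemma bb_aux (t : ℝ) (ht : t ∈ Set.Icc (0 : ℝ) 1)
    (t' : ℝ) (ht' : t' ∈ Set.Icc (0 : ℝ) 1) (htt : t ≤ t') :
    HasSum
      (fun k : ℕ =>
        2 * Real.sin (π * (k + 1) * t) * Real.sin (π * (k + 1) * t') /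
          (π ^ 2 * ((k : ℝ) + 1) ^ 2))
      (min t t' - t * t') := by
  obtain ⟨ht0, ht1⟩ := ht
  obtain ⟨ht0', ht1'⟩ := ht'
  have hu : (t' - t)/2 ∈ Set.Icc (0:ℝ) 1 := by constructor <;> [linarith; linarith]
  have hv : (t + t')/2 ∈ Set.Icc (0:ℝ) 1 := by constructor <;> [linarith; linarith]
  have h := ((cos_hasSum hu).sub (cos_hasSum hv)).div_const (π^2)
  have hπ : (π:ℝ) ≠ 0 := Real.pi_ne_zero
  convert h using 1
  · rfl
  · funext k
    have hk : ((k:ℝ)+1) ≠ 0 := by positivity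
    have e1 : 2*π*((k:ℝ)+1)*((t'-t)/2) = π*((k:ℝ)+1)*t' - π*((k:ℝ)+1)*t := by ring
    have e2 : 2*π*((k:ℝ)+1)*((t+t')/2) = π*((k:ℝ)+1)*t + π*((k:ℝ)+1)*t' := by ring
    rw [e1, e2, Real.cos_sub, Real.cos_add]
    field_simp
    ring
  · rw [min_eq_left htt]
    field_simp
    ring

/-- Mercer expansion of the Brownian-bridge kernel: for `t, t' ∈ [0,1]`, the
series `∑_{k≥1} 2 sin(πkt) sin(πkt') / (π²k²)` converges with sum `min(t,t') - t t'`. -/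
theorem bbKernel_mercer (t : ℝ) (ht : t ∈ Set.Icc (0 : ℝ) 1)
    (t' : ℝ) (ht' : t' ∈ Set.Icc (0 : ℝ) 1) :
    HasSum
      (fun k : ℕ =>
        2 * Real.sin (π * (k + 1) * t) * Real.sin (π * (k + 1) * t') /
          (π ^ 2 * ((k : ℝ) + 1) ^ 2))
      (min t t' - t * t') := by
  rcases le_total t t' with h | h
  · exact bb_aux t ht t' ht' h
  · have := bb_aux t' ht' t ht h
    rw [min_comm] at this
    rw [mul_comm t' t] at this
    convert this using 2 with k
    ring
end

section
/- For every positive integer j and every s ∈ (0,1), ∫₀¹ χ(s,s') f_{χ,j}(s') ds' = (1/(j(j+1))) · f_{χ,j}(s); that is, the functions f_{χ,j} are eigenfunctions of the integral operator on L²(0,1) with the Anderson–Darling kernel χ, with eigenvalues 1/(j(j+1)). -/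
open Real intervalIntegral

/-- The polynomials `q_j`: `q_1(u) = 1`, `q_2(u) = 3u`, and for `j ≥ 2`,
`q_{j+1}(u) = (1/j)[(2j+1) u q_j(u) - (j+1) q_{j-1}(u)]`.  (`q 0` is an unused dummy.) -/
noncomputable def adPoly : ℕ → ℝ → ℝ
  | 0 => fun _ => 0
  | 1 => fun _ => 1
  | 2 => fun u => 3 * u
  | j + 3 => fun u =>
      (1 / ((j : ℝ) + 2)) *
        ((2 * ((j : ℝ) + 2) + 1) * u * adPoly (j + 2) u - (((j : ℝ) + 2) + 1) * adPoly (j + 1) u)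

section AD_Aux
open Polynomial

/-- Polynomial version of `adPoly`. -/
noncomputable def adQ : ℕ → Polynomial ℝ
  | 0 => 0
  | 1 => 1
  | 2 => C 3 * X
  | j + 3 =>
      C (1 / ((j : ℝ) + 2)) *
        (C (2 * ((j : ℝ) + 2) + 1) * X * adQ (j + 2) - C (((j : ℝ) + 2) + 1) * adQ (j + 1))

theorem adQ_rec (j : ℕ) :
    C ((j : ℝ) + 1) * adQ (j + 2) =
      C (2 * (j : ℝ) + 3) * X * adQ (j + 1) - C ((j : ℝ) + 2) * adQ j := by
  cases j with
  | zero => simp [adQ]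
  | succ k =>
      have hC : C ((k : ℝ) + 1 + 1) * C (1 / ((k : ℝ) + 2)) = 1 := by
        rw [← C_mul]
        have hk : ((k : ℝ) + 2) ≠ 0 := by positivity
        rw [show ((k : ℝ) + 1 + 1) * (1 / ((k : ℝ) + 2)) = 1 by rw [show ((k:ℝ)+1+1) = ((k:ℝ)+2) by ring]; field_simp]
        exact C_1
      have hdef : adQ (k + 3) = C (1 / ((k : ℝ) + 2)) *
            (C (2 * ((k : ℝ) + 2) + 1) * X * adQ (k + 2) - C (((k : ℝ) + 2) + 1) * adQ (k + 1)) := rfl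
      push_cast
      rw [show k + 1 + 2 = k + 3 from rfl, hdef, ← mul_assoc]
      rw [show ((k:ℝ) + 1 + 1) = ((k:ℝ) + 1 + 1) from rfl] at hC
      rw [hC, one_mul]
      push_cast
      ring_nf

theorem adPoly_eq_eval : ∀ (j : ℕ) (u : ℝ), adPoly j u = (adQ j).eval u := by
  intro j
  induction j using Nat.strong_induction_on with
  | _ j ih =>
    match j with
    | 0 => intro u; simp [adPoly, adQ]
    | 1 => intro u; simp [adPoly, adQ]
    | 2 => intro u; simp [adPoly, adQ]
    | (k+3) =>
      intro u
      simp [adPoly, adQ, ih (k+2) (by omega), ih (k+1) (by omega)]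

/-- The key first-order identity `(1-X²) q_j' = (j+2) X q_j - j q_{j+1}`. -/
theorem adQ_S (j : ℕ) :
    (1 - X ^ 2) * (adQ j).derivative =
      C ((j : ℝ) + 2) * X * adQ j - C (j : ℝ) * adQ (j + 1) := by
  induction j using Nat.twoStepInduction with
  | zero => simp [adQ]
  | one =>
      simp [adQ]
      rw [show ((1 : Polynomial ℝ) + C 2) = C 3 by rw [← C_1, ← C_add]; norm_num]
      ring
  | more j ih1 ih2 =>
    have hrec := adQ_rec j
    have hrec1 := adQ_rec (j + 1)
    have hder := congrArg derivative hrec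
    simp only [derivative_sub, derivative_mul, derivative_C, derivative_X, zero_mul, zero_add,
      mul_one, zero_sub] at hder
    push_cast at hrec1 ih1 ih2 hder hrec ⊢
    simp only [map_add, map_mul, map_one, map_ofNat] at hrec1 ih1 ih2 hder hrec ⊢
    have hcan : (C (j : ℝ) + 1) * ((1 - X ^ 2) * (adQ (j + 2)).derivative) =
        (C (j : ℝ) + 1) * ((C (j:ℝ) + 2 + 2) * X * adQ (j + 2) - (C (j:ℝ) + 2) * adQ (j + 3)) := by
      linear_combination (1 - X^2) * hder + ((2 * C (j:ℝ) + 3) * X) * ih2 - (C ((j:ℝ)) + 2) * ih1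
        - ((C ((j:ℝ)) + 2) * X) * hrec + (C ((j:ℝ)) + 1) * hrec1
    have hne : ((C ((j : ℝ)) + 1) : Polynomial ℝ) ≠ 0 := by
      intro h
      have := congrArg (fun p => Polynomial.eval 0 p) h
      simp at this
      exact absurd this (by positivity)
    have := mul_left_cancel₀ hne hcan
    linear_combination this

theorem adQ_R (j : ℕ) :
    (1 - X ^ 2) * (adQ (j + 1)).derivative =
      C ((j : ℝ) + 2) * adQ j - C (j : ℝ) * X * adQ (j + 1) := by
  have h1 := adQ_S (j + 1)
  have h2 := adQ_rec j
  push_cast at h1 h2 ⊢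
  simp only [map_add, map_mul, map_one, map_ofNat] at h1 h2 ⊢
  linear_combination h1 - h2

theorem adQ_ODE (j : ℕ) :
    (1 - X ^ 2) * (adQ j).derivative.derivative =
      C 4 * X * (adQ j).derivative - C (((j : ℝ) + 2) * ((j : ℝ) - 1)) * adQ j := by
  have hS := adQ_S j
  have hR := adQ_R j
  have hder := congrArg derivative hS
  simp only [derivative_sub, derivative_mul, derivative_C, derivative_one, derivative_X,
    derivative_X_pow, zero_mul, zero_add, mul_one, zero_sub, Nat.cast_ofNat, pow_one] at hder
  push_cast at hS hR hder ⊢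
  simp only [map_add, map_mul, map_one, map_ofNat, map_sub, map_neg] at hS hR hder ⊢
  have hne : ((1 : Polynomial ℝ) - X ^ 2) ≠ 0 := by
    intro h
    have := congrArg (fun p => Polynomial.eval 0 p) h
    simp at this
  refine mul_left_cancel₀ hne ?_
  linear_combination (1 - X^2) * hder + ((C (j:ℝ)) * X) * hS - (C (j:ℝ)) * hR

theorem adQ_M (j : ℕ) :
    ((1 - X ^ 2) * adQ j).derivative.derivative = C (-((j : ℝ) * ((j : ℝ) + 1))) * adQ j := by
  have h := adQ_ODE j
  simp only [derivative_mul, derivative_sub, derivative_one, derivative_X_pow, derivative_X,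
    derivative_ofNat, derivative_add, derivative_neg, Nat.cast_ofNat, pow_one, zero_sub,
    zero_mul, zero_add, mul_one, map_ofNat] at *
  push_cast at *
  simp only [map_add, map_mul, map_one, map_ofNat, map_sub, map_neg] at *
  linear_combination h

noncomputable def adM (j : ℕ) : Polynomial ℝ := (1 - X ^ 2) * adQ j

noncomputable def adHp (j : ℕ) : Polynomial ℝ := (adQ j).comp (C 2 * X - 1)

noncomputable def adGp (j : ℕ) : Polynomial ℝ :=
  C (1 / (4 * ((j : ℝ) * ((j : ℝ) + 1)))) * (adM j).comp (C 2 * X - 1)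

theorem adHp_eval (j : ℕ) (s : ℝ) : (adHp j).eval s = adPoly j (2 * s - 1) := by
  simp [adHp, Polynomial.eval_comp, adPoly_eq_eval]

theorem adHp_continuous (j : ℕ) : Continuous fun s : ℝ => adPoly j (2 * s - 1) := by
  have : (fun s : ℝ => adPoly j (2 * s - 1)) = fun s => (adHp j).eval s := by
    funext s; rw [adHp_eval]
  rw [this]
  exact (adHp j).continuous

theorem adGp_eval (j : ℕ) (hN : ((j : ℝ) * ((j : ℝ) + 1)) ≠ 0) (s : ℝ) :
    (adGp j).eval s = (1 / ((j : ℝ) * ((j : ℝ) + 1))) * (s * (1 - s) * adPoly j (2 * s - 1)) := by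
  simp only [adGp, adM, Polynomial.eval_mul, Polynomial.eval_C, Polynomial.eval_comp,
    Polynomial.eval_sub, Polynomial.eval_one, Polynomial.eval_pow, Polynomial.eval_X,
    Polynomial.eval_ofNat, ← adPoly_eq_eval]
  field_simp
  ring

theorem adGp_deriv2 (j : ℕ) (hN : ((j : ℝ) * ((j : ℝ) + 1)) ≠ 0) :
    (adGp j).derivative.derivative = - adHp j := by
  have hr : derivative (C 2 * X - 1 : Polynomial ℝ) = C 2 := by
    simp [derivative_sub]
  have h1 : (adGp j).derivative
      = C (1 / (4 * ((j : ℝ) * ((j : ℝ) + 1)))) * (C 2 * ((adM j).derivative.comp (C 2 * X - 1))) := by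
    rw [adGp, derivative_C_mul, derivative_comp, hr]
  have h2 : (adGp j).derivative.derivative
      = C (1 / (4 * ((j : ℝ) * ((j : ℝ) + 1)))) * (C 2 * (C 2 * (((adM j).derivative.derivative).comp (C 2 * X - 1)))) := by
    rw [h1, derivative_C_mul, derivative_C_mul, derivative_comp, hr]
  rw [h2, show (adM j).derivative.derivative = C (-((j : ℝ) * ((j : ℝ) + 1))) * adQ j from adQ_M j]
  rw [Polynomial.mul_comp, Polynomial.C_comp]
  rw [show ((adQ j).comp (C 2 * X - 1)) = adHp j from rfl]
  rw [← mul_assoc, ← mul_assoc, ← mul_assoc, ← C_mul, ← C_mul, ← C_mul]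
  have h4 : (4 * ((j : ℝ) * ((j : ℝ) + 1))) ≠ 0 := mul_ne_zero (by norm_num) hN
  rw [show (1 / (4 * ((j : ℝ) * ((j : ℝ) + 1))) * 2 * 2 * -((j : ℝ) * ((j : ℝ) + 1)))
      = -((4 * ((j : ℝ) * ((j : ℝ) + 1))) / (4 * ((j : ℝ) * ((j : ℝ) + 1)))) by ring,
    div_self h4]
  simp

noncomputable def adA (j : ℕ) (s : ℝ) : ℝ := ∫ t in (0:ℝ)..s, t * adPoly j (2 * t - 1)
noncomputable def adB (j : ℕ) (s : ℝ) : ℝ := ∫ t in (0:ℝ)..s, (1 - t) * adPoly j (2 * t - 1)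
noncomputable def adF (j : ℕ) (s : ℝ) : ℝ := (1 - s) * adA j s + s * (adB j 1 - adB j s)

theorem adA_hasDerivAt (j : ℕ) (x : ℝ) :
    HasDerivAt (adA j) (x * adPoly j (2 * x - 1)) x :=
  ((continuous_id.mul (adHp_continuous j)).integral_hasStrictDerivAt 0 x).hasDerivAt

theorem adB_hasDerivAt (j : ℕ) (x : ℝ) :
    HasDerivAt (adB j) ((1 - x) * adPoly j (2 * x - 1)) x :=
  (((continuous_const.sub continuous_id).mul (adHp_continuous j)).integral_hasStrictDerivAt 0 x).hasDerivAt

/-- `F = eval Gp` everywhere. -/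
theorem adF_eq_adGp (j : ℕ) (hN : ((j : ℝ) * ((j : ℝ) + 1)) ≠ 0) (s : ℝ) :
    adF j s = (adGp j).eval s := by
  set Φ : ℝ → ℝ := fun x => adB j 1 - adA j x - adB j x - (adGp j).derivative.eval x with hΦdef
  have hΦderiv : ∀ x, HasDerivAt Φ 0 x := by
    intro x
    have h1 : HasDerivAt (fun y => (adGp j).derivative.eval y)
        ((adGp j).derivative.derivative.eval x) x := (adGp j).derivative.hasDerivAt x
    have h2 : HasDerivAt Φ _ x := (((hasDerivAt_const x (adB j 1)).sub (adA_hasDerivAt j x)).sub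
        (adB_hasDerivAt j x)).sub h1
    convert h2 using 1
    rw [adGp_deriv2 j hN]
    simp [adHp_eval]
    ring
  have hΦconst : ∀ x, Φ x = Φ 0 := fun x =>
    is_const_of_deriv_eq_zero (fun y => (hΦderiv y).differentiableAt)
      (fun y => (hΦderiv y).deriv) x 0
  set D : ℝ → ℝ := fun x => adF j x - (adGp j).eval x with hDdef
  have hDderiv : ∀ x, HasDerivAt D (Φ x) x := by
    intro x
    have h1 : HasDerivAt (fun y => (adGp j).eval y) ((adGp j).derivative.eval x) x :=
      (adGp j).hasDerivAt x
    have hu : HasDerivAt (fun y : ℝ => 1 - y) (-1) x := (hasDerivAt_id x).const_sub 1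
    have h2 := (hu.mul (adA_hasDerivAt j x)).add
      ((hasDerivAt_id x).mul ((adB_hasDerivAt j x).const_sub (adB j 1)))
    have h3 : HasDerivAt D _ x := h2.sub h1
    convert h3 using 1
    simp only [hΦdef, id_eq]
    ring
  have hDderiv' : ∀ x, HasDerivAt D (Φ 0) x := fun x => hΦconst x ▸ hDderiv x
  have hD2const : ∀ x, D x - Φ 0 * x = D 0 - Φ 0 * 0 := by
    intro x
    have : ∀ y, HasDerivAt (fun z => D z - Φ 0 * z) 0 y := by
      intro y
      have : HasDerivAt (fun z => D z - Φ 0 * z) _ y :=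
        (hDderiv' y).sub ((hasDerivAt_id y).const_mul (Φ 0))
      simpa using this
    exact is_const_of_deriv_eq_zero (fun y => (this y).differentiableAt)
      (fun y => (this y).deriv) x 0
  have hD0 : D 0 = 0 := by
    simp [hDdef, adF, adA, adGp_eval j hN, intervalIntegral.integral_same]
  have hD1 : D 1 = 0 := by
    simp [hDdef, adF, adGp_eval j hN]
  have hΦ0 : Φ 0 = 0 := by
    have := hD2const 1
    rw [hD0, hD1] at this
    linarith
  have := hD2const s
  rw [hD0, hΦ0] at this
  simp only [hDdef, mul_zero, sub_zero] at this
  linarith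

theorem adCore (j : ℕ) (hN : ((j : ℝ) * ((j : ℝ) + 1)) ≠ 0) (s : ℝ) (hs : s ∈ Set.Icc (0:ℝ) 1) :
    ∫ t in (0:ℝ)..1, (min s t - s * t) * adPoly j (2 * t - 1) =
      (1 / ((j : ℝ) * ((j : ℝ) + 1))) * (s * (1 - s) * adPoly j (2 * s - 1)) := by
  have hcont := adHp_continuous j
  have hker : Continuous fun t : ℝ => (min s t - s * t) * adPoly j (2 * t - 1) :=
    ((continuous_const.min continuous_id).sub (continuous_const.mul continuous_id)).mul hcont
  have hI1 : IntervalIntegrable (fun t : ℝ => (min s t - s * t) * adPoly j (2 * t - 1))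
      MeasureTheory.volume 0 s := hker.intervalIntegrable 0 s
  have hI2 : IntervalIntegrable (fun t : ℝ => (min s t - s * t) * adPoly j (2 * t - 1))
      MeasureTheory.volume s 1 := hker.intervalIntegrable s 1
  have hsplit := intervalIntegral.integral_add_adjacent_intervals hI1 hI2
  have hpiece1 : (∫ t in (0:ℝ)..s, (min s t - s * t) * adPoly j (2 * t - 1))
      = (1 - s) * adA j s := by
    rw [show ∫ t in (0:ℝ)..s, (min s t - s * t) * adPoly j (2 * t - 1)
        = ∫ t in (0:ℝ)..s, (1 - s) * (t * adPoly j (2 * t - 1)) from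
      intervalIntegral.integral_congr (by
        intro t ht
        rw [Set.uIcc_of_le hs.1] at ht
        show (min s t - s * t) * adPoly j (2 * t - 1) = (1 - s) * (t * adPoly j (2 * t - 1))
        rw [min_eq_right ht.2]
        ring)]
    rw [intervalIntegral.integral_const_mul]
    rfl
  have hpiece2 : (∫ t in s..(1:ℝ), (min s t - s * t) * adPoly j (2 * t - 1))
      = s * (adB j 1 - adB j s) := by
    rw [show ∫ t in s..(1:ℝ), (min s t - s * t) * adPoly j (2 * t - 1)
        = ∫ t in s..(1:ℝ), s * ((1 - t) * adPoly j (2 * t - 1)) from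
      intervalIntegral.integral_congr (by
        intro t ht
        rw [Set.uIcc_of_le hs.2] at ht
        show (min s t - s * t) * adPoly j (2 * t - 1) = s * ((1 - t) * adPoly j (2 * t - 1))
        rw [min_eq_left ht.1]
        ring)]
    rw [intervalIntegral.integral_const_mul]
    have hBc : Continuous fun t : ℝ => (1 - t) * adPoly j (2 * t - 1) :=
      (continuous_const.sub continuous_id).mul hcont
    have hJ1 : IntervalIntegrable (fun t : ℝ => (1 - t) * adPoly j (2 * t - 1))
      MeasureTheory.volume 0 1 := hBc.intervalIntegrable 0 1
    have hJ2 : IntervalIntegrable (fun t : ℝ => (1 - t) * adPoly j (2 * t - 1))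
      MeasureTheory.volume 0 s := hBc.intervalIntegrable 0 s
    have := intervalIntegral.integral_interval_sub_left hJ1 hJ2
    rw [show (∫ t in s..(1:ℝ), (1 - t) * adPoly j (2 * t - 1)) = adB j 1 - adB j s from this.symm]
  rw [← hsplit, hpiece1, hpiece2]
  rw [show (1 - s) * adA j s + s * (adB j 1 - adB j s) = adF j s from rfl]
  rw [adF_eq_adGp j hN s, adGp_eval j hN s]

end AD_Aux

/-- The functions `f_{χ,j}(s) = 2 √((2j+1)/(j(j+1))) √(s(1-s)) q_j(2s-1)`. -/
noncomputable def adEigenfun (j : ℕ) (s : ℝ) : ℝ :=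
  2 * Real.sqrt ((2 * (j : ℝ) + 1) / ((j : ℝ) * ((j : ℝ) + 1))) *
    Real.sqrt (s * (1 - s)) * adPoly j (2 * s - 1)

/-- The Anderson–Darling kernel `χ(s,s') = (min(s,s') - s s')/√(s(1-s)s'(1-s'))`. -/
noncomputable def adKernel (s s' : ℝ) : ℝ :=
  (min s s' - s * s') / Real.sqrt (s * (1 - s) * s' * (1 - s'))

/-- the `f_{χ,j}` are eigenfunctions of the integral operator on `L²(0,1)`
with the Anderson–Darling kernel `χ`, with eigenvalues `1/(j(j+1))`. -/
theorem adKernel_eigenfunction (j : ℕ) (hj : 1 ≤ j) (s : ℝ) (hs : s ∈ Set.Ioo (0 : ℝ) 1) :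
    ∫ s' in (0 : ℝ)..1, adKernel s s' * adEigenfun j s' =
      (1 / ((j : ℝ) * ((j : ℝ) + 1))) * adEigenfun j s := by
  obtain ⟨hs0, hs1⟩ := hs
  have hj1 : (1 : ℝ) ≤ (j : ℝ) := by exact_mod_cast hj
  have hN : ((j : ℝ) * ((j : ℝ) + 1)) ≠ 0 := by positivity
  set c : ℝ := 2 * Real.sqrt ((2 * (j : ℝ) + 1) / ((j : ℝ) * ((j : ℝ) + 1))) with hc
  set w : ℝ := Real.sqrt (s * (1 - s)) with hw
  have hwpos : 0 < w := Real.sqrt_pos.2 (by nlinarith)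
  have hEq : Set.EqOn (fun t => adKernel s t * adEigenfun j t)
      (fun t => (c / w) * ((min s t - s * t) * adPoly j (2 * t - 1)))
      (Set.uIcc (0 : ℝ) 1) := by
    intro t ht
    rw [Set.uIcc_of_le (by norm_num : (0:ℝ) ≤ 1)] at ht
    by_cases h0 : t = 0
    · subst h0
      show adKernel s 0 * adEigenfun j 0 = (c / w) * ((min s 0 - s * 0) * adPoly j (2 * 0 - 1))
      simp [adKernel, adEigenfun, min_eq_right hs0.le]
    by_cases h1 : t = 1
    · subst h1
      show adKernel s 1 * adEigenfun j 1 = (c / w) * ((min s 1 - s * 1) * adPoly j (2 * 1 - 1))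
      simp [adKernel, adEigenfun, min_eq_left hs1.le]
    · have ht0 : 0 < t := lt_of_le_of_ne ht.1 (Ne.symm h0)
      have ht1 : t < 1 := lt_of_le_of_ne ht.2 h1
      have hvpos : 0 < Real.sqrt (t * (1 - t)) := Real.sqrt_pos.2 (by nlinarith)
      show adKernel s t * adEigenfun j t = (c / w) * ((min s t - s * t) * adPoly j (2 * t - 1))
      rw [adKernel, adEigenfun,
        show s * (1 - s) * t * (1 - t) = (s * (1 - s)) * (t * (1 - t)) by ring,
        Real.sqrt_mul (by nlinarith : (0:ℝ) ≤ s * (1 - s)), ← hw, ← hc]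
      rw [div_mul_eq_mul_div, show (min s t - s * t) *
          (c * Real.sqrt (t * (1 - t)) * adPoly j (2 * t - 1)) =
          ((min s t - s * t) * (c * adPoly j (2 * t - 1))) * Real.sqrt (t * (1 - t)) by ring,
        mul_div_mul_right _ _ hvpos.ne']
      ring
  rw [intervalIntegral.integral_congr hEq, intervalIntegral.integral_const_mul,
    adCore j hN s ⟨hs0.le, hs1.le⟩]
  have hww : w * w = s * (1 - s) := Real.mul_self_sqrt (by nlinarith)
  rw [adEigenfun, ← hc, ← hw, ← hww]
  field_simp
end

section
/- Let X_1, ..., X_n be i.i.d. real random variables with a continuous cumulative distribution function H. Then for every c with 1 ≤ c ≤ n−1, the two-sample Cramér–von Mises statistic satisfies E[W_n(c)] = 1/6 + 1/(6n). -/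
open MeasureTheory ProbabilityTheory Filter Real

section CvmAux
open Filter

lemma aux_noatom {μ : Measure ℝ} [IsProbabilityMeasure μ]
    (hcont : Continuous fun x => (μ (Set.Iic x)).toReal) (x : ℝ) : μ {x} = 0 := by
  have hfin : ∀ y : ℝ, μ (Set.Iic y) ≠ ⊤ := fun y => measure_ne_top μ _
  have hle : ∀ n : ℕ, (μ {x}).toReal ≤
      (μ (Set.Iic x)).toReal - (μ (Set.Iic (x - 1/(n+1)))).toReal := by
    intro n
    have hp : (0:ℝ) < 1/((n:ℝ)+1) := by positivity
    have hsub : Set.Iic (x - 1/((n:ℝ)+1)) ⊆ Set.Iic x := by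
      intro y hy; simp only [Set.mem_Iic] at *; linarith
    have hsing : {x} ⊆ Set.Iic x \ Set.Iic (x - 1/((n:ℝ)+1)) := by
      intro y hy
      simp only [Set.mem_singleton_iff] at hy; subst hy
      refine ⟨by simp, ?_⟩
      simp only [Set.mem_Iic, not_le]; linarith
    have h1 : μ {x} ≤ μ (Set.Iic x) - μ (Set.Iic (x - 1/((n:ℝ)+1))) :=
      (measure_mono hsing).trans
        (le_of_eq (measure_diff hsub measurableSet_Iic.nullMeasurableSet (hfin _)))
    have hne : μ (Set.Iic x) - μ (Set.Iic (x - 1/((n:ℝ)+1))) ≠ ⊤ :=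
      (tsub_le_self.trans_lt (lt_top_iff_ne_top.2 (hfin x))).ne
    have h3 := ENNReal.toReal_mono hne h1
    rwa [ENNReal.toReal_sub_of_le (measure_mono hsub) (hfin x)] at h3
  have htend : Tendsto (fun n : ℕ => (μ (Set.Iic x)).toReal - (μ (Set.Iic (x - 1/((n:ℝ)+1)))).toReal)
      atTop (nhds 0) := by
    have h1 : Tendsto (fun n : ℕ => x - 1/((n:ℝ)+1)) atTop (nhds x) := by
      have h0 : Tendsto (fun n : ℕ => 1/((n:ℝ)+1)) atTop (nhds 0) :=
        tendsto_one_div_add_atTop_nhds_zero_nat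
      have := (tendsto_const_nhds (x := x) (f := atTop (α := ℕ))).sub h0
      simpa using this
    have h2 := (hcont.tendsto x).comp h1
    have := ((tendsto_const_nhds (x := (μ (Set.Iic x)).toReal) (f := atTop (α := ℕ))).sub h2)
    simpa using this
  have hle0 : (μ {x}).toReal ≤ 0 :=
    ge_of_tendsto htend (Filter.Eventually.of_forall hle)
  have : (μ {x}).toReal = 0 := le_antisymm hle0 ENNReal.toReal_nonneg
  rw [ENNReal.toReal_eq_zero_iff] at this
  exact this.resolve_right (measure_ne_top μ _)
variable {μ : Measure ℝ} [IsProbabilityMeasure μ]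

lemma aux_diag (h : ∀ x : ℝ, μ {x} = 0) : (μ.prod μ) {p : ℝ × ℝ | p.1 = p.2} = 0 := by
  have hm : MeasurableSet {p : ℝ × ℝ | p.1 = p.2} :=
    measurableSet_eq_fun measurable_fst measurable_snd
  rw [Measure.prod_apply hm]
  have : ∀ x : ℝ, μ (Prod.mk x ⁻¹' {p : ℝ × ℝ | p.1 = p.2}) = 0 := by
    intro x
    have : Prod.mk x ⁻¹' {p : ℝ × ℝ | p.1 = p.2} = {x} := by ext y; simp [eq_comm]
    rw [this]; exact h x
  rw [funext this]; simp

lemma aux_pair (h : ∀ x : ℝ, μ {x} = 0) : (μ.prod μ) {p : ℝ × ℝ | p.2 ≤ p.1} = 1/2 := by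
  set A : Set (ℝ × ℝ) := {p | p.2 ≤ p.1} with hA
  set B : Set (ℝ × ℝ) := {p | p.1 ≤ p.2} with hB
  have hmA : MeasurableSet A := measurableSet_le measurable_snd measurable_fst
  have hmB : MeasurableSet B := measurableSet_le measurable_fst measurable_snd
  have hBA : (μ.prod μ) B = (μ.prod μ) A := by
    have hpre : B = Prod.swap ⁻¹' A := by ext p; simp [hA, hB]
    rw [hpre, ← Measure.map_apply measurable_swap hmA, Measure.prod_swap]
  have hunion : A ∪ B = Set.univ := by
    ext p; simp [hA, hB, le_total p.2 p.1]
  have hinter : (μ.prod μ) (A ∩ B) = 0 := by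
    refine measure_mono_null ?_ (aux_diag h)
    intro p hp; exact le_antisymm hp.2 hp.1
  have key : (μ.prod μ) A + (μ.prod μ) A = 1 := by
    have := measure_union_add_inter (μ := μ.prod μ) A hmB
    rw [hunion, hinter, add_zero, hBA] at this
    rw [← this, measure_univ]
  have h2 : 2 * (μ.prod μ) A = 1 := by rw [two_mul]; exact key
  rw [ENNReal.eq_div_iff (by norm_num) (by norm_num)]
  exact h2

lemma aux_triple (h : ∀ x : ℝ, μ {x} = 0) :
    ((μ.prod μ).prod μ) {p : (ℝ × ℝ) × ℝ | p.1.1 ≤ p.2 ∧ p.1.2 ≤ p.2} = 1/3 := by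
  set τ := (μ.prod μ).prod μ with hτ
  set A : Set ((ℝ × ℝ) × ℝ) := {p | p.1.1 ≤ p.2 ∧ p.1.2 ≤ p.2} with hA
  set B : Set ((ℝ × ℝ) × ℝ) := {p | p.2 ≤ p.1.1 ∧ p.1.2 ≤ p.1.1} with hB
  set C : Set ((ℝ × ℝ) × ℝ) := {p | p.1.1 ≤ p.1.2 ∧ p.2 ≤ p.1.2} with hC
  have hmA : MeasurableSet A :=
    (measurableSet_le (measurable_fst.comp measurable_fst) measurable_snd).inter
      (measurableSet_le (measurable_snd.comp measurable_fst) measurable_snd)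
  have hmB : MeasurableSet B :=
    (measurableSet_le measurable_snd (measurable_fst.comp measurable_fst)).inter
      (measurableSet_le (measurable_snd.comp measurable_fst) (measurable_fst.comp measurable_fst))
  have hmC : MeasurableSet C :=
    (measurableSet_le (measurable_fst.comp measurable_fst) (measurable_snd.comp measurable_fst)).inter
      (measurableSet_le measurable_snd (measurable_snd.comp measurable_fst))
  -- measure preserving maps
  have hφ : MeasurePreserving (fun p : (ℝ × ℝ) × ℝ => ((p.2, p.1.2), p.1.1)) τ τ := by
    have h1 : MeasurePreserving (Prod.swap : (ℝ × ℝ) × ℝ → ℝ × (ℝ × ℝ)) τ (μ.prod (μ.prod μ)) :=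
      Measure.measurePreserving_swap
    have h2 : MeasurePreserving (Prod.map (id : ℝ → ℝ) (Prod.swap : ℝ × ℝ → ℝ × ℝ))
        (μ.prod (μ.prod μ)) (μ.prod (μ.prod μ)) :=
      (MeasurePreserving.id μ).prod Measure.measurePreserving_swap
    have h3 : MeasurePreserving (MeasurableEquiv.prodAssoc.symm : ℝ × (ℝ × ℝ) ≃ᵐ (ℝ × ℝ) × ℝ)
        (μ.prod (μ.prod μ)) τ :=
      (MeasureTheory.measurePreserving_prodAssoc μ μ μ).symm MeasurableEquiv.prodAssoc
    exact (h3.comp (h2.comp h1) : _)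
  have hψ : MeasurePreserving (fun p : (ℝ × ℝ) × ℝ => ((p.1.1, p.2), p.1.2)) τ τ := by
    have h1 : MeasurePreserving (MeasurableEquiv.prodAssoc : (ℝ × ℝ) × ℝ ≃ᵐ ℝ × (ℝ × ℝ)) τ
        (μ.prod (μ.prod μ)) := MeasureTheory.measurePreserving_prodAssoc μ μ μ
    have h2 : MeasurePreserving (Prod.map (id : ℝ → ℝ) (Prod.swap : ℝ × ℝ → ℝ × ℝ))
        (μ.prod (μ.prod μ)) (μ.prod (μ.prod μ)) :=
      (MeasurePreserving.id μ).prod Measure.measurePreserving_swap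
    have h3 : MeasurePreserving (MeasurableEquiv.prodAssoc.symm : ℝ × (ℝ × ℝ) ≃ᵐ (ℝ × ℝ) × ℝ)
        (μ.prod (μ.prod μ)) τ :=
      (MeasureTheory.measurePreserving_prodAssoc μ μ μ).symm MeasurableEquiv.prodAssoc
    exact (h3.comp (h2.comp h1) : _)
  have hBA : τ B = τ A := by
    have : B = (fun p : (ℝ × ℝ) × ℝ => ((p.2, p.1.2), p.1.1)) ⁻¹' A := by
      ext p; simp [hA, hB, and_comm]
    rw [this, hφ.measure_preimage hmA.nullMeasurableSet]
  have hCA : τ C = τ A := by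
    have : C = (fun p : (ℝ × ℝ) × ℝ => ((p.1.1, p.2), p.1.2)) ⁻¹' A := by
      ext p; simp [hA, hC, and_comm]
    rw [this, hψ.measure_preimage hmA.nullMeasurableSet]
  -- null intersections
  have null1 : τ {p : (ℝ × ℝ) × ℝ | p.1.1 = p.2} = 0 := by
    have hm : MeasurableSet {p : (ℝ × ℝ) × ℝ | p.1.1 = p.2} :=
      measurableSet_eq_fun (measurable_fst.comp measurable_fst) measurable_snd
    rw [hτ, Measure.prod_apply hm]
    have : ∀ q : ℝ × ℝ, μ (Prod.mk q ⁻¹' {p : (ℝ × ℝ) × ℝ | p.1.1 = p.2}) = 0 := by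
      intro q
      have : Prod.mk q ⁻¹' {p : (ℝ × ℝ) × ℝ | p.1.1 = p.2} = {q.1} := by ext z; simp [eq_comm]
      rw [this]; exact h q.1
    rw [funext this]; simp
  have null2 : τ {p : (ℝ × ℝ) × ℝ | p.1.2 = p.2} = 0 := by
    have hm : MeasurableSet {p : (ℝ × ℝ) × ℝ | p.1.2 = p.2} :=
      measurableSet_eq_fun (measurable_snd.comp measurable_fst) measurable_snd
    rw [hτ, Measure.prod_apply hm]
    have : ∀ q : ℝ × ℝ, μ (Prod.mk q ⁻¹' {p : (ℝ × ℝ) × ℝ | p.1.2 = p.2}) = 0 := by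
      intro q
      have : Prod.mk q ⁻¹' {p : (ℝ × ℝ) × ℝ | p.1.2 = p.2} = {q.2} := by ext z; simp [eq_comm]
      rw [this]; exact h q.2
    rw [funext this]; simp
  have null3 : τ {p : (ℝ × ℝ) × ℝ | p.1.1 = p.1.2} = 0 := by
    have : {p : (ℝ × ℝ) × ℝ | p.1.1 = p.1.2} = {q : ℝ × ℝ | q.1 = q.2} ×ˢ Set.univ := by
      ext p; simp
    rw [hτ, this, Measure.prod_prod, aux_diag h, zero_mul]
  have hABnull : τ (A ∩ B) = 0 :=
    measure_mono_null (fun p hp => le_antisymm hp.1.1 hp.2.1) null1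
  have hACnull : τ (A ∩ C) = 0 :=
    measure_mono_null (fun p hp => le_antisymm hp.1.2 hp.2.2) null2
  have hBCnull : τ (B ∩ C) = 0 :=
    measure_mono_null (fun p hp => le_antisymm hp.2.1 hp.1.2) null3
  have hABCunion : (A ∪ B) ∪ C = Set.univ := by
    ext p
    simp only [Set.mem_union, Set.mem_univ, iff_true, hA, hB, hC, Set.mem_setOf_eq]
    rcases le_total p.1.1 p.2 with h1 | h1 <;> rcases le_total p.1.2 p.2 with h2 | h2 <;>
      rcases le_total p.1.1 p.1.2 with h3 | h3
    all_goals first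
      | exact Or.inl (Or.inl ⟨h1, h2⟩)
      | exact Or.inl (Or.inr ⟨by linarith, by linarith⟩)
      | exact Or.inr ⟨by linarith, by linarith⟩
  have hAB : τ (A ∪ B) = τ A + τ B := by
    have := measure_union_add_inter (μ := τ) A hmB
    rw [hABnull, add_zero] at this
    exact this
  have hsum : τ A + τ B + τ C = 1 := by
    have := measure_union_add_inter (μ := τ) (A ∪ B) hmC
    have hnull : τ ((A ∪ B) ∩ C) = 0 := by
      refine measure_mono_null ?_ (measure_union_null hACnull hBCnull)
      rintro p ⟨hp1 | hp1, hp2⟩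
      · exact Or.inl ⟨hp1, hp2⟩
      · exact Or.inr ⟨hp1, hp2⟩
    rw [hABCunion, hnull, add_zero, hAB] at this
    rw [← this, measure_univ]
  rw [hBA, hCA] at hsum
  have h3 : 3 * τ A = 1 := by
    rw [show (3 : ENNReal) * τ A = τ A + τ A + τ A by ring]
    exact hsum
  rw [ENNReal.eq_div_iff (by norm_num) (by norm_num)]
  exact h3
lemma sumQ (s t : Finset ℕ) (i : ℕ) :
    ∑ j ∈ s, ∑ k ∈ t, ((1:ℝ)/3 +
      ((if j = i then (1:ℝ) else 0) + (if k = i then (1:ℝ) else 0) + (if j = k then (1:ℝ) else 0)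
        + (if j = i then (1:ℝ) else 0) * (if k = i then (1:ℝ) else 0))/6)
    = (s.card : ℝ) * t.card / 3 +
      ((t.card : ℝ) * (if i ∈ s then 1 else 0) + (s.card : ℝ) * (if i ∈ t then 1 else 0)
        + ((s ∩ t).card : ℝ)
        + (if i ∈ s then (1:ℝ) else 0) * (if i ∈ t then 1 else 0)) / 6 := by
  classical
  have h1 : ∀ (u : Finset ℕ), (∑ j ∈ u, if j = i then (1:ℝ) else 0) = if i ∈ u then 1 else 0 := by
    intro u; rw [Finset.sum_ite_eq' u i (fun _ => (1:ℝ))]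
  have h2 : ∀ j, (∑ k ∈ t, if j = k then (1:ℝ) else 0) = if j ∈ t then 1 else 0 := by
    intro j; rw [Finset.sum_ite_eq t j (fun _ => (1:ℝ))]
  have h3 : (∑ j ∈ s, if j ∈ t then (1:ℝ) else 0) = ((s ∩ t).card : ℝ) := by
    rw [Finset.sum_boole, Finset.filter_mem_eq_inter]
  simp only [Finset.sum_add_distrib, Finset.sum_div, Finset.sum_const, nsmul_eq_mul,
    ← Finset.sum_div, h1, h2, h3, ← Finset.mul_sum, ← Finset.sum_mul]
  push_cast
  ring
end CvmAux

/-- Two-sample Cramér–von Mises statistic `W_n(c)` for the first `c` of `n` observations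
versus the rest.  `F_c` is the empirical cdf of `X 0, …, X (c-1)`, `G_d` that of
`X c, …, X (n-1)`, and the `dH_n` integral is the average over all `n` data points. -/
noncomputable def cvmW (X : ℕ → ℝ) (n c : ℕ) : ℝ :=
  ((c : ℝ) * ((n : ℝ) - c) / n) *
    ((∑ i ∈ Finset.range n,
        ((∑ i' ∈ Finset.range c, if X i' ≤ X i then (1 : ℝ) else 0) / c -
          (∑ i' ∈ Finset.Ico c n, if X i' ≤ X i then (1 : ℝ) else 0) / ((n : ℝ) - c)) ^ 2) / n)

/-- for i.i.d. observations with a continuous cdf and any `1 ≤ c ≤ n-1`,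
`E[W_n(c)] = 1/6 + 1/(6n)`. -/
theorem cvmW_mean
    {Ω : Type*} [MeasurableSpace Ω] {P : Measure Ω} [IsProbabilityMeasure P]
    (X : ℕ → Ω → ℝ) (hXmeas : ∀ i, Measurable (X i))
    (hXindep : iIndepFun X P)
    (μ : Measure ℝ) (hXlaw : ∀ i, Measure.map (X i) P = μ)
    (hcont : Continuous fun x => (μ (Set.Iic x)).toReal)
    (n c : ℕ) (hc : 1 ≤ c) (hcn : c ≤ n - 1) :
    ∫ ω, cvmW (fun i => X i ω) n c ∂P = 1 / 6 + 1 / (6 * n) := by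
  classical
  haveI hμprob : IsProbabilityMeasure μ := by
    rw [← hXlaw 0]; exact Measure.isProbabilityMeasure_map (hXmeas 0).aemeasurable
  have hatom : ∀ x : ℝ, μ {x} = 0 := aux_noatom hcont
  -- arithmetic on indices
  have hn2 : 2 ≤ n := by omega
  set d : ℕ := n - c with hdd
  have hncd : n = c + d := by omega
  have hd1 : 1 ≤ d := by omega
  have hc0 : (c:ℝ) ≠ 0 := by positivity
  have hd0 : (d:ℝ) ≠ 0 := by positivity
  have hn0 : (n:ℝ) ≠ 0 := by positivity
  have hnc : (n:ℝ) - c = (d:ℝ) := by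
    rw [hncd]; push_cast; ring
  -- probability of pairwise event
  have hP2 : ∀ i j : ℕ, j ≠ i → P {ω | X j ω ≤ X i ω} = 1/2 := by
    intro i j hji
    have hind : IndepFun (X i) (X j) P := hXindep.indepFun (Ne.symm hji)
    have hmap : P.map (fun ω => (X i ω, X j ω)) = μ.prod μ := by
      rw [(indepFun_iff_map_prod_eq_prod_map_map (hXmeas i).aemeasurable
        (hXmeas j).aemeasurable).1 hind, hXlaw i, hXlaw j]
    have hev : {ω | X j ω ≤ X i ω}
        = (fun ω => (X i ω, X j ω)) ⁻¹' {p : ℝ × ℝ | p.2 ≤ p.1} := rfl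
    rw [hev, ← Measure.map_apply ((hXmeas i).prodMk (hXmeas j))
      (measurableSet_le measurable_snd measurable_fst), hmap, aux_pair hatom]
  -- probability of triple event
  have hP3 : ∀ i j k : ℕ, j ≠ i → k ≠ i → j ≠ k →
      P {ω | X j ω ≤ X i ω ∧ X k ω ≤ X i ω} = 1/3 := by
    intro i j k hji hki hjk
    have hindjk : IndepFun (X j) (X k) P := hXindep.indepFun hjk
    have hmapjk : P.map (fun ω => (X j ω, X k ω)) = μ.prod μ := by
      rw [(indepFun_iff_map_prod_eq_prod_map_map (hXmeas j).aemeasurable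
        (hXmeas k).aemeasurable).1 hindjk, hXlaw j, hXlaw k]
    have hind : IndepFun (fun ω => (X j ω, X k ω)) (X i) P :=
      hXindep.indepFun_prodMk hXmeas j k i hji hki
    have hmap : P.map (fun ω => ((X j ω, X k ω), X i ω)) = (μ.prod μ).prod μ := by
      rw [(indepFun_iff_map_prod_eq_prod_map_map
        (((hXmeas j).prodMk (hXmeas k)).aemeasurable) (hXmeas i).aemeasurable).1 hind,
        hmapjk, hXlaw i]
    have hev : {ω | X j ω ≤ X i ω ∧ X k ω ≤ X i ω}
        = (fun ω => ((X j ω, X k ω), X i ω)) ⁻¹'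
          {p : (ℝ × ℝ) × ℝ | p.1.1 ≤ p.2 ∧ p.1.2 ≤ p.2} := rfl
    have hmA : MeasurableSet {p : (ℝ × ℝ) × ℝ | p.1.1 ≤ p.2 ∧ p.1.2 ≤ p.2} :=
      (measurableSet_le (measurable_fst.comp measurable_fst) measurable_snd).inter
        (measurableSet_le (measurable_snd.comp measurable_fst) measurable_snd)
    rw [hev, ← Measure.map_apply (((hXmeas j).prodMk (hXmeas k)).prodMk (hXmeas i)) hmA,
      hmap, aux_triple hatom]
  -- indicator integrals helper
  have hind : ∀ (S : Set Ω), MeasurableSet S →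
      ∫ ω, (if ω ∈ S then (1:ℝ) else 0) ∂P = (P S).toReal := by
    intro S hS
    have heq : (fun ω => if ω ∈ S then (1:ℝ) else 0) = S.indicator (fun _ => (1:ℝ)) := by
      funext ω; simp [Set.indicator_apply]
    rw [heq]
    exact MeasureTheory.integral_indicator_one hS
  have hSmeas : ∀ j i : ℕ, MeasurableSet {ω | X j ω ≤ X i ω} :=
    fun j i => measurableSet_le (hXmeas j) (hXmeas i)
  have hImeas : ∀ j i : ℕ, Measurable (fun ω => if X j ω ≤ X i ω then (1:ℝ) else 0) :=
    fun j i => Measurable.ite (hSmeas j i) measurable_const measurable_const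
  have hIint : ∀ j i : ℕ, Integrable (fun ω => if X j ω ≤ X i ω then (1:ℝ) else 0) P := by
    intro j i
    have heq : (fun ω => if X j ω ≤ X i ω then (1:ℝ) else 0)
        = Set.indicator {ω | X j ω ≤ X i ω} (fun _ => (1:ℝ)) := by
      funext ω; simp [Set.indicator_apply, Set.mem_setOf_eq]
    rw [heq]
    exact (integrable_indicator_iff (hSmeas j i)).2
      (integrableOn_const (measure_lt_top P _).ne)
  have hJint : ∀ j k i : ℕ, Integrable (fun ω =>
      (if X j ω ≤ X i ω then (1:ℝ) else 0) * (if X k ω ≤ X i ω then (1:ℝ) else 0)) P := by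
    intro j k i
    refine (hIint k i).bdd_mul (c := 1) (hImeas j i).aestronglyMeasurable (Filter.Eventually.of_forall fun ω => ?_)
    by_cases h : X j ω ≤ X i ω <;> simp [h]
  -- value of single indicator integral
  have hI2 : ∀ i j : ℕ, j ≠ i →
      ∫ ω, (if X j ω ≤ X i ω then (1:ℝ) else 0) ∂P = 1/2 := by
    intro i j hji
    have : (fun ω => if X j ω ≤ X i ω then (1:ℝ) else 0)
        = fun ω => if ω ∈ {ω | X j ω ≤ X i ω} then (1:ℝ) else 0 := by
      funext ω; simp [Set.mem_setOf_eq]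
    rw [this, hind _ (hSmeas j i), hP2 i j hji]
    simp [ENNReal.toReal_div]
  -- the master per-triple integral value
  have hee : ∀ i j k : ℕ,
      ∫ ω, (if X j ω ≤ X i ω then (1:ℝ) else 0) * (if X k ω ≤ X i ω then (1:ℝ) else 0) ∂P
      = (1:ℝ)/3 + ((if j = i then (1:ℝ) else 0) + (if k = i then (1:ℝ) else 0)
          + (if j = k then (1:ℝ) else 0)
          + (if j = i then (1:ℝ) else 0) * (if k = i then (1:ℝ) else 0))/6 := by
    intro i j k
    rcases eq_or_ne j i with rfl | hji
    · rcases eq_or_ne k j with rfl | hkj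
      · -- j = k = i
        have : (fun ω => (if X k ω ≤ X k ω then (1:ℝ) else 0) *
            (if X k ω ≤ X k ω then (1:ℝ) else 0)) = fun _ => (1:ℝ) := by
          funext ω; simp
        rw [this]
        simp
        norm_num
      · -- j = i, k ≠ i
        have : (fun ω => (if X j ω ≤ X j ω then (1:ℝ) else 0) *
            (if X k ω ≤ X j ω then (1:ℝ) else 0))
            = fun ω => (if X k ω ≤ X j ω then (1:ℝ) else 0) := by
          funext ω; simp
        rw [this, hI2 j k hkj]
        simp [Ne.symm hkj, hkj]
        norm_num
    · rcases eq_or_ne k i with rfl | hki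
      · -- k = i, j ≠ i
        have : (fun ω => (if X j ω ≤ X k ω then (1:ℝ) else 0) *
            (if X k ω ≤ X k ω then (1:ℝ) else 0))
            = fun ω => (if X j ω ≤ X k ω then (1:ℝ) else 0) := by
          funext ω; simp
        rw [this, hI2 k j hji]
        simp [hji]
        norm_num
      · rcases eq_or_ne j k with rfl | hjk
        · -- j = k ≠ i
          have : (fun ω => (if X j ω ≤ X i ω then (1:ℝ) else 0) *
              (if X j ω ≤ X i ω then (1:ℝ) else 0))
              = fun ω => (if X j ω ≤ X i ω then (1:ℝ) else 0) := by
            funext ω; by_cases h : X j ω ≤ X i ω <;> simp [h]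
          rw [this, hI2 i j hji]
          simp [hji]
          norm_num
        · -- all distinct
          have heq : (fun ω => (if X j ω ≤ X i ω then (1:ℝ) else 0) *
              (if X k ω ≤ X i ω then (1:ℝ) else 0))
              = Set.indicator {ω | X j ω ≤ X i ω ∧ X k ω ≤ X i ω} (1 : Ω → ℝ) := by
            funext ω
            by_cases h1 : X j ω ≤ X i ω <;> by_cases h2 : X k ω ≤ X i ω <;>
              simp [Set.indicator_apply, Set.mem_setOf_eq, h1, h2, Pi.one_apply]
          rw [heq, MeasureTheory.integral_indicator_one
            (show MeasurableSet {ω | X j ω ≤ X i ω ∧ X k ω ≤ X i ω} from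
              (hSmeas j i).inter (hSmeas k i)), measureReal_def, hP3 i j k hji hki hjk]
          simp [hji, hki, hjk, ENNReal.toReal_div]
  -- double-sum integral evaluation
  have hTint : ∀ (s t : Finset ℕ) (i : ℕ), Integrable (fun ω => ∑ j ∈ s, ∑ k ∈ t,
      ((if X j ω ≤ X i ω then (1:ℝ) else 0) * (if X k ω ≤ X i ω then (1:ℝ) else 0))) P :=
    fun s t i => integrable_finset_sum s
      (fun j _ => integrable_finset_sum t (fun k _ => hJint j k i))
  have hT : ∀ (s t : Finset ℕ) (i : ℕ),
      ∫ ω, (∑ j ∈ s, ∑ k ∈ t,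
        ((if X j ω ≤ X i ω then (1:ℝ) else 0) * (if X k ω ≤ X i ω then (1:ℝ) else 0))) ∂P
      = (s.card : ℝ) * t.card / 3 +
        ((t.card : ℝ) * (if i ∈ s then 1 else 0) + (s.card : ℝ) * (if i ∈ t then 1 else 0)
          + ((s ∩ t).card : ℝ)
          + (if i ∈ s then (1:ℝ) else 0) * (if i ∈ t then 1 else 0)) / 6 := by
    intro s t i
    rw [integral_finset_sum s (fun j _ => integrable_finset_sum t (fun k _ => hJint j k i))]
    rw [Finset.sum_congr rfl (fun j _ => integral_finset_sum t (fun k _ => hJint j k i))]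
    rw [Finset.sum_congr rfl (fun j _ => Finset.sum_congr rfl (fun k _ => hee i j k))]
    exact sumQ s t i
  set q1 : ℝ := (c:ℝ) * d / ((n:ℝ) * n) / ((c:ℝ) * c) with hq1
  set q2 : ℝ := -(2 * ((c:ℝ) * d / ((n:ℝ) * n)) / ((c:ℝ) * d)) with hq2
  set q3 : ℝ := (c:ℝ) * d / ((n:ℝ) * n) / ((d:ℝ) * d) with hq3
  have hpt : ∀ ω, cvmW (fun i => X i ω) n c
      = ∑ i ∈ Finset.range n,
          (q1 * (∑ j ∈ Finset.range c, ∑ k ∈ Finset.range c,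
              ((if X j ω ≤ X i ω then (1:ℝ) else 0) * (if X k ω ≤ X i ω then (1:ℝ) else 0)))
           + (q2 * (∑ j ∈ Finset.range c, ∑ k ∈ Finset.Ico c n,
              ((if X j ω ≤ X i ω then (1:ℝ) else 0) * (if X k ω ≤ X i ω then (1:ℝ) else 0)))
            + q3 * (∑ j ∈ Finset.Ico c n, ∑ k ∈ Finset.Ico c n,
              ((if X j ω ≤ X i ω then (1:ℝ) else 0) * (if X k ω ≤ X i ω then (1:ℝ) else 0))))) := by
    intro ω
    simp only [cvmW]
    rw [hnc, Finset.sum_div, Finset.mul_sum]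
    refine Finset.sum_congr rfl fun i _ => ?_
    rw [← Finset.sum_mul_sum, ← Finset.sum_mul_sum, ← Finset.sum_mul_sum]
    rw [hq1, hq2, hq3]
    field_simp
    ring
  have hfint : ∀ i : ℕ, Integrable (fun ω =>
      q1 * (∑ j ∈ Finset.range c, ∑ k ∈ Finset.range c,
          ((if X j ω ≤ X i ω then (1:ℝ) else 0) * (if X k ω ≤ X i ω then (1:ℝ) else 0)))
       + (q2 * (∑ j ∈ Finset.range c, ∑ k ∈ Finset.Ico c n,
          ((if X j ω ≤ X i ω then (1:ℝ) else 0) * (if X k ω ≤ X i ω then (1:ℝ) else 0)))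
        + q3 * (∑ j ∈ Finset.Ico c n, ∑ k ∈ Finset.Ico c n,
          ((if X j ω ≤ X i ω then (1:ℝ) else 0) * (if X k ω ≤ X i ω then (1:ℝ) else 0))))) P :=
    fun i => ((hTint _ _ i).const_mul q1).add
      (((hTint _ _ i).const_mul q2).add ((hTint _ _ i).const_mul q3))
  have step1 : ∫ ω, cvmW (fun i => X i ω) n c ∂P
      = ∑ i ∈ Finset.range n, ∫ ω,
          (q1 * (∑ j ∈ Finset.range c, ∑ k ∈ Finset.range c,
              ((if X j ω ≤ X i ω then (1:ℝ) else 0) * (if X k ω ≤ X i ω then (1:ℝ) else 0)))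
           + (q2 * (∑ j ∈ Finset.range c, ∑ k ∈ Finset.Ico c n,
              ((if X j ω ≤ X i ω then (1:ℝ) else 0) * (if X k ω ≤ X i ω then (1:ℝ) else 0)))
            + q3 * (∑ j ∈ Finset.Ico c n, ∑ k ∈ Finset.Ico c n,
              ((if X j ω ≤ X i ω then (1:ℝ) else 0) * (if X k ω ≤ X i ω then (1:ℝ) else 0))))) ∂P := by
    rw [integral_congr_ae (Filter.Eventually.of_forall hpt)]
    exact integral_finset_sum _ (fun i _ => hfint i)
  have hfval : ∀ i : ℕ, ∫ ω,
      (q1 * (∑ j ∈ Finset.range c, ∑ k ∈ Finset.range c,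
          ((if X j ω ≤ X i ω then (1:ℝ) else 0) * (if X k ω ≤ X i ω then (1:ℝ) else 0)))
       + (q2 * (∑ j ∈ Finset.range c, ∑ k ∈ Finset.Ico c n,
          ((if X j ω ≤ X i ω then (1:ℝ) else 0) * (if X k ω ≤ X i ω then (1:ℝ) else 0)))
        + q3 * (∑ j ∈ Finset.Ico c n, ∑ k ∈ Finset.Ico c n,
          ((if X j ω ≤ X i ω then (1:ℝ) else 0) * (if X k ω ≤ X i ω then (1:ℝ) else 0))))) ∂P
      = q1 * ((c:ℝ) * c / 3 + ((c:ℝ) * (if i ∈ Finset.range c then 1 else 0)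
            + (c:ℝ) * (if i ∈ Finset.range c then 1 else 0) + (c:ℝ)
            + (if i ∈ Finset.range c then (1:ℝ) else 0) * (if i ∈ Finset.range c then 1 else 0)) / 6)
        + (q2 * ((c:ℝ) * d / 3 + ((d:ℝ) * (if i ∈ Finset.range c then 1 else 0)
            + (c:ℝ) * (if i ∈ Finset.Ico c n then 1 else 0) + (0:ℝ)
            + (if i ∈ Finset.range c then (1:ℝ) else 0) * (if i ∈ Finset.Ico c n then 1 else 0)) / 6)
          + q3 * ((d:ℝ) * d / 3 + ((d:ℝ) * (if i ∈ Finset.Ico c n then 1 else 0)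
            + (d:ℝ) * (if i ∈ Finset.Ico c n then 1 else 0) + (d:ℝ)
            + (if i ∈ Finset.Ico c n then (1:ℝ) else 0) * (if i ∈ Finset.Ico c n then 1 else 0)) / 6)) := by
    intro i
    have i1 : Integrable (fun ω =>
        q2 * (∑ j ∈ Finset.range c, ∑ k ∈ Finset.Ico c n,
          ((if X j ω ≤ X i ω then (1:ℝ) else 0) * (if X k ω ≤ X i ω then (1:ℝ) else 0)))
        + q3 * (∑ j ∈ Finset.Ico c n, ∑ k ∈ Finset.Ico c n,
          ((if X j ω ≤ X i ω then (1:ℝ) else 0) * (if X k ω ≤ X i ω then (1:ℝ) else 0)))) P :=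
      ((hTint _ _ i).const_mul q2).add ((hTint _ _ i).const_mul q3)
    rw [integral_add ((hTint _ _ i).const_mul q1) i1,
      integral_add ((hTint _ _ i).const_mul q2) ((hTint _ _ i).const_mul q3),
      integral_const_mul, integral_const_mul, integral_const_mul, hT, hT, hT]
    have e1 : (Finset.range c).card = c := Finset.card_range c
    have e2 : (Finset.Ico c n).card = d := by rw [Nat.card_Ico, ← hdd]
    have e3 : Finset.range c ∩ Finset.range c = Finset.range c := Finset.inter_self _
    have e4 : Finset.range c ∩ Finset.Ico c n = ∅ := by
      ext x; simp only [Finset.mem_inter, Finset.mem_range, Finset.mem_Ico,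
        Finset.notMem_empty, iff_false]; omega
    have e5 : Finset.Ico c n ∩ Finset.Ico c n = Finset.Ico c n := Finset.inter_self _
    rw [e1, e2, e3, e4, e5, e1, e2]
    simp
  rw [step1, Finset.sum_congr rfl (fun i _ => hfval i)]
  -- split the outer sum
  have hsplit : Finset.range n = Finset.range c ∪ Finset.Ico c n := by
    ext x
    simp only [Finset.mem_union, Finset.mem_range, Finset.mem_Ico]
    omega
  have hdisj : Disjoint (Finset.range c) (Finset.Ico c n) := by
    rw [Finset.disjoint_left]
    intro a ha hb
    simp only [Finset.mem_range] at ha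
    simp only [Finset.mem_Ico] at hb
    omega
  rw [hsplit, Finset.sum_union hdisj]
  have hval1 : ∀ i ∈ Finset.range c,
      (q1 * ((c:ℝ) * c / 3 + ((c:ℝ) * (if i ∈ Finset.range c then 1 else 0)
            + (c:ℝ) * (if i ∈ Finset.range c then 1 else 0) + (c:ℝ)
            + (if i ∈ Finset.range c then (1:ℝ) else 0) * (if i ∈ Finset.range c then 1 else 0)) / 6)
        + (q2 * ((c:ℝ) * d / 3 + ((d:ℝ) * (if i ∈ Finset.range c then 1 else 0)
            + (c:ℝ) * (if i ∈ Finset.Ico c n then 1 else 0) + (0:ℝ)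
            + (if i ∈ Finset.range c then (1:ℝ) else 0) * (if i ∈ Finset.Ico c n then 1 else 0)) / 6)
          + q3 * ((d:ℝ) * d / 3 + ((d:ℝ) * (if i ∈ Finset.Ico c n then 1 else 0)
            + (d:ℝ) * (if i ∈ Finset.Ico c n then 1 else 0) + (d:ℝ)
            + (if i ∈ Finset.Ico c n then (1:ℝ) else 0) * (if i ∈ Finset.Ico c n then 1 else 0)) / 6)))
      = q1 * ((c:ℝ) * c / 3 + (3 * (c:ℝ) + 1) / 6)
        + q2 * ((c:ℝ) * d / 3 + (d:ℝ) / 6) + q3 * ((d:ℝ) * d / 3 + (d:ℝ) / 6) := by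
    intro i hi
    have h2 : i ∉ Finset.Ico c n := by
      simp only [Finset.mem_range] at hi
      simp only [Finset.mem_Ico]
      omega
    simp only [if_pos hi, if_neg h2]
    ring
  have hval2 : ∀ i ∈ Finset.Ico c n,
      (q1 * ((c:ℝ) * c / 3 + ((c:ℝ) * (if i ∈ Finset.range c then 1 else 0)
            + (c:ℝ) * (if i ∈ Finset.range c then 1 else 0) + (c:ℝ)
            + (if i ∈ Finset.range c then (1:ℝ) else 0) * (if i ∈ Finset.range c then 1 else 0)) / 6)
        + (q2 * ((c:ℝ) * d / 3 + ((d:ℝ) * (if i ∈ Finset.range c then 1 else 0)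
            + (c:ℝ) * (if i ∈ Finset.Ico c n then 1 else 0) + (0:ℝ)
            + (if i ∈ Finset.range c then (1:ℝ) else 0) * (if i ∈ Finset.Ico c n then 1 else 0)) / 6)
          + q3 * ((d:ℝ) * d / 3 + ((d:ℝ) * (if i ∈ Finset.Ico c n then 1 else 0)
            + (d:ℝ) * (if i ∈ Finset.Ico c n then 1 else 0) + (d:ℝ)
            + (if i ∈ Finset.Ico c n then (1:ℝ) else 0) * (if i ∈ Finset.Ico c n then 1 else 0)) / 6)))
      = q1 * ((c:ℝ) * c / 3 + (c:ℝ) / 6)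
        + q2 * ((c:ℝ) * d / 3 + (c:ℝ) / 6) + q3 * ((d:ℝ) * d / 3 + (3 * (d:ℝ) + 1) / 6) := by
    intro i hi
    have h2 : i ∉ Finset.range c := by
      simp only [Finset.mem_Ico] at hi
      simp only [Finset.mem_range]
      omega
    simp only [if_pos hi, if_neg h2]
    ring
  rw [Finset.sum_congr rfl hval1, Finset.sum_congr rfl hval2, Finset.sum_const,
    Finset.sum_const, Finset.card_range, Nat.card_Ico, ← hdd, nsmul_eq_mul, nsmul_eq_mul]
  have hnR : (n:ℝ) = (c:ℝ) + (d:ℝ) := by rw [hncd]; push_cast; ring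
  rw [hq1, hq2, hq3, hnR]
  have hcd0 : (c:ℝ) + (d:ℝ) ≠ 0 := by positivity
  field_simp
  ring
end

section
/- Let X_1, ..., X_n (n ≥ 2) be independent real random variables, each with variance σ², such that E[X_i] = μ for 1 ≤ i ≤ c and E[X_i] = μ + Δ for c < i ≤ n, where 1 ≤ c < n. Define s₁² = Σ_{i=1}^{n−1} (X_{i+1} − X_i)² / (2(n−1)). Then E[s₁²] = σ² + Δ²/(2(n−1)); in particular, when Δ = 0 (no change in mean) the estimator s₁² is unbiased for σ². -/
open MeasureTheory ProbabilityTheory Filter Real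

/-- if `X_1,…,X_n` (`n ≥ 2`) are independent with common variance `σ²`,
mean `μ` before the change point `c` and mean `μ + Δ` after it, then the
successive-differences estimator `s₁² = ∑_{i=1}^{n-1}(X_{i+1}-X_i)²/(2(n-1))` has
expectation `σ² + Δ²/(2(n-1))`; in particular it is unbiased for `σ²` when `Δ = 0`.
(Observations are indexed `0,…,n-1`, so `X_1,…,X_c` correspond to indices `i < c`.) -/
theorem successive_differences_mean
    {Ω : Type*} [MeasurableSpace Ω] {P : Measure Ω} [IsProbabilityMeasure P]
    (n : ℕ) (hn : 2 ≤ n) (c : ℕ) (hc : 1 ≤ c) (hcn : c < n)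
    (X : ℕ → Ω → ℝ) (hXmeas : ∀ i, Measurable (X i))
    (hXindep : iIndepFun X P)
    (hL2 : ∀ i, i < n → MemLp (X i) 2 P)
    (σ2 : ℝ) (hvar : ∀ i, i < n → variance (X i) P = σ2)
    (μ Δ : ℝ)
    (hmean1 : ∀ i, i < c → ∫ ω, X i ω ∂P = μ)
    (hmean2 : ∀ i, c ≤ i → i < n → ∫ ω, X i ω ∂P = μ + Δ) :
    ∫ ω, (∑ i ∈ Finset.range (n - 1), (X (i + 1) ω - X i ω) ^ 2) / (2 * ((n : ℝ) - 1)) ∂P =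
      σ2 + Δ ^ 2 / (2 * ((n : ℝ) - 1)) := by
  have hn1 : (1:ℝ) ≤ (n:ℝ) - 1 := by
    have : (2:ℝ) ≤ n := by exact_mod_cast hn
    linarith
  have hne : (2 * ((n : ℝ) - 1)) ≠ 0 := by positivity
  -- key per-term expectation
  have hterm : ∀ i ∈ Finset.range (n - 1),
      ∫ ω, (X (i + 1) ω - X i ω) ^ 2 ∂P
        = 2 * σ2 + (if i = c - 1 then Δ ^ 2 else 0) := by
    intro i hi
    rw [Finset.mem_range] at hi
    have hi1 : i + 1 < n := by omega
    have hin : i < n := by omega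
    have hLd : MemLp (fun ω => X (i + 1) ω - X i ω) 2 P :=
      (hL2 _ hi1).sub (hL2 _ hin)
    have hindep : IndepFun (X (i + 1)) (X i) P :=
      hXindep.indepFun (by omega)
    have hvd : variance (fun ω => X (i + 1) ω - X i ω) P = 2 * σ2 := by
      have h1 : (fun ω => X (i + 1) ω - X i ω) = X (i + 1) + (-(X i)) := by
        funext ω; simp [sub_eq_add_neg]
      have hneg : MemLp (-(X i)) 2 P := (hL2 _ hin).neg
      have hvn : variance (-(X i)) P = σ2 := by
        have : (-(X i)) = fun ω => (-1 : ℝ) * X i ω := by funext ω; simp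
        rw [this, variance_const_mul, hvar _ hin]; ring
      rw [h1, (hindep.neg_right).variance_add (hL2 _ hi1) hneg, hvar _ hi1, hvn]
      ring
    have hint : ∫ ω, (fun ω => X (i + 1) ω - X i ω) ω ∂P
        = (∫ ω, X (i + 1) ω ∂P) - ∫ ω, X i ω ∂P := by
      exact integral_sub ((hL2 _ hi1).integrable one_le_two)
        ((hL2 _ hin).integrable one_le_two)
    have hvd' := variance_eq_sub hLd
    have hsq : ∫ ω, (X (i + 1) ω - X i ω) ^ 2 ∂P
        = variance (fun ω => X (i + 1) ω - X i ω) P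
          + ((∫ ω, X (i + 1) ω ∂P) - ∫ ω, X i ω ∂P) ^ 2 := by
      have : variance (fun ω => X (i + 1) ω - X i ω) P
          = (∫ ω, (X (i + 1) ω - X i ω) ^ 2 ∂P)
            - ((∫ ω, X (i + 1) ω ∂P) - ∫ ω, X i ω ∂P) ^ 2 := by
        simpa [hint] using hvd'
      linarith
    rw [hsq, hvd]
    congr 1
    by_cases h : i = c - 1
    · have hic : i < c := by omega
      have hic1 : c ≤ i + 1 := by omega
      rw [if_pos h, hmean1 _ hic, hmean2 _ hic1 hi1]
      ring
    · rw [if_neg h]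
      rcases lt_or_ge i (c - 1) with h' | h'
      · have : i + 1 < c := by omega
        rw [hmean1 _ this, hmean1 _ (by omega)]; ring
      · have hci : c ≤ i := by omega
        rw [hmean2 _ (by omega) hi1, hmean2 _ hci hin]; ring
  have hintg : ∀ i ∈ Finset.range (n - 1),
      Integrable (fun ω => (X (i + 1) ω - X i ω) ^ 2) P := by
    intro i hi
    rw [Finset.mem_range] at hi
    exact ((hL2 _ (by omega : i + 1 < n)).sub (hL2 _ (by omega : i < n))).integrable_sq
  have hsum : ∫ ω, (∑ i ∈ Finset.range (n - 1), (X (i + 1) ω - X i ω) ^ 2) ∂P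
      = 2 * σ2 * (n - 1 : ℕ) + Δ ^ 2 := by
    rw [integral_finset_sum _ hintg, Finset.sum_congr rfl hterm,
      Finset.sum_add_distrib, Finset.sum_const, Finset.sum_ite_eq'
        (Finset.range (n - 1)) (c - 1) (fun _ => Δ ^ 2),
      if_pos (Finset.mem_range.2 (by omega))]
    simp [mul_comm]
  rw [integral_div, hsum]
  have hcast : ((n - 1 : ℕ) : ℝ) = (n : ℝ) - 1 := by
    have : 1 ≤ n := by omega
    push_cast [this]; ring
  rw [hcast]
  field_simp
end

section
/- Let X_1, ..., X_n be i.i.d. real random variables with a continuous cumulative distribution function H, and let U_1, ..., U_n be i.i.d. uniform random variables on [0,1]. Then the averaged two-sample Cramér–von Mises statistic is distribution free: the law of W̄_n(X_1,...,X_n) equals the law of W̄_n(U_1,...,U_n); moreover W̄_n(X_1,...,X_n) = W̄_n(H(X_1),...,H(X_n)) almost surely. -/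
open MeasureTheory ProbabilityTheory Filter Real

/-- Averaged two-sample Cramér–von Mises statistic `W̄_n`. -/
noncomputable def cvmWbar (X : ℕ → ℝ) (n : ℕ) : ℝ :=
  (∑ c ∈ Finset.Icc 1 (n - 1), cvmW X n c) / ((n : ℝ) - 1)

open scoped ENNReal Topology

lemma cvmWbar_congr {Y Z : ℕ → ℝ} {n : ℕ}
    (h : ∀ i < n, ∀ j, j < n → ((Y i ≤ Y j) ↔ (Z i ≤ Z j))) :
    cvmWbar Y n = cvmWbar Z n := by
  unfold cvmWbar
  congr 1
  refine Finset.sum_congr rfl fun c hc => ?_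
  simp only [Finset.mem_Icc] at hc
  unfold cvmW
  congr 1
  congr 1
  refine Finset.sum_congr rfl fun i hi => ?_
  simp only [Finset.mem_range] at hi
  have A : (∑ i' ∈ Finset.range c, if Y i' ≤ Y i then (1:ℝ) else 0)
      = ∑ i' ∈ Finset.range c, if Z i' ≤ Z i then (1:ℝ) else 0 := by
    refine Finset.sum_congr rfl fun i' hi' => ?_
    simp only [Finset.mem_range] at hi'
    exact if_congr (h i' (by omega) i hi) rfl rfl
  have B : (∑ i' ∈ Finset.Ico c n, if Y i' ≤ Y i then (1:ℝ) else 0)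
      = ∑ i' ∈ Finset.Ico c n, if Z i' ≤ Z i then (1:ℝ) else 0 := by
    refine Finset.sum_congr rfl fun i' hi' => ?_
    simp only [Finset.mem_Ico] at hi'
    exact if_congr (h i' (by omega) i hi) rfl rfl
  rw [A, B]

lemma cvmWbar_congr_eq {Y Z : ℕ → ℝ} {n : ℕ} (h : ∀ i < n, Y i = Z i) :
    cvmWbar Y n = cvmWbar Z n :=
  cvmWbar_congr fun i hi j hj => by rw [h i hi, h j hj]

noncomputable def cvmWbarFin (n : ℕ) (v : Fin n → ℝ) : ℝ :=
  cvmWbar (fun i => if h : i < n then v ⟨i, h⟩ else 0) n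

lemma measurable_cvmWbarFin (n : ℕ) : Measurable (cvmWbarFin n) := by
  have key : ∀ m : ℕ, Measurable (fun v : Fin n → ℝ => if h : m < n then v ⟨m, h⟩ else 0) := by
    intro m
    by_cases h : m < n
    · simpa [h] using measurable_pi_apply (⟨m, h⟩ : Fin n)
    · simp only [h, dif_neg, not_false_iff]; exact measurable_const
  unfold cvmWbarFin cvmWbar cvmW
  refine Measurable.div ?_ measurable_const
  refine Finset.measurable_sum _ fun c _ => ?_
  refine Measurable.const_mul ?_ _
  refine Measurable.div ?_ measurable_const
  refine Finset.measurable_sum _ fun i _ => ?_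
  refine Measurable.pow_const ?_ 2
  refine Measurable.sub ?_ ?_ <;>
    refine Measurable.div_const ?_ _ <;>
    refine Finset.measurable_sum _ fun i' _ => ?_ <;>
    exact Measurable.ite (measurableSet_le (key i') (key i)) measurable_const measurable_const

lemma cvmWbar_eq_fin (Y : ℕ → ℝ) (n : ℕ) :
    cvmWbar Y n = cvmWbarFin n (fun i : Fin n => Y i) :=
  cvmWbar_congr_eq fun i hi => by simp [hi]
open scoped ENNReal Topology

lemma law_pi {Ω : Type*} [MeasurableSpace Ω] {P : Measure Ω} [IsProbabilityMeasure P]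
    (Y : ℕ → Ω → ℝ) (hm : ∀ i, Measurable (Y i))
    (hind : iIndepFun Y P) (n : ℕ) :
    Measure.map (fun ω => fun i : Fin n => Y (i : ℕ) ω) P
      = Measure.pi (fun i : Fin n => Measure.map (Y (i : ℕ)) P) := by
  haveI : ∀ i : Fin n, IsProbabilityMeasure (Measure.map (Y (i : ℕ)) P) :=
    fun i => Measure.isProbabilityMeasure_map (hm _).aemeasurable
  refine (Measure.pi_eq fun s hs => ?_).symm
  have hvec : Measurable (fun ω => fun i : Fin n => Y (i : ℕ) ω) :=
    measurable_pi_lambda _ fun i => hm _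
  rw [Measure.map_apply hvec (MeasurableSet.univ_pi hs)]
  set s' : ℕ → Set ℝ := fun m => if h : m < n then s ⟨m, h⟩ else Set.univ with hs'
  have hpre : (fun ω => fun i : Fin n => Y (i : ℕ) ω) ⁻¹' (Set.univ.pi s)
      = ⋂ m ∈ Finset.range n, Y m ⁻¹' s' m := by
    ext ω
    simp only [Set.mem_preimage, Set.mem_pi, Set.mem_univ, forall_true_left, Set.mem_iInter,
      Finset.mem_range]
    constructor
    · intro h m hmn
      simp only [s', dif_pos hmn]
      exact h ⟨m, hmn⟩
    · intro h i
      have := h (i : ℕ) i.isLt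
      simpa only [s', dif_pos i.isLt] using this
  have hmeas' : ∀ m ∈ Finset.range n, MeasurableSet (s' m) := by
    intro m hm'
    simp only [Finset.mem_range] at hm'
    simp only [s', dif_pos hm']
    exact hs _
  rw [hpre, hind.measure_inter_preimage_eq_mul _ hmeas', Finset.prod_range]
  refine Finset.prod_congr rfl fun i _ => ?_
  rw [Measure.map_apply (hm _) (hs i)]
  congr 1
  simp only [s', dif_pos i.isLt]

lemma indep_eq_null {Ω : Type*} [MeasurableSpace Ω] {P : Measure Ω} [IsProbabilityMeasure P]
    {f g : Ω → ℝ} (hf : Measurable f) (hg : Measurable g) (hind : IndepFun f g P)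
    (hatom : NoAtoms (Measure.map g P)) : P {ω | f ω = g ω} = 0 := by
  have hd : MeasurableSet {p : ℝ × ℝ | p.1 = p.2} :=
    measurableSet_eq_fun measurable_fst measurable_snd
  have hmap := (indepFun_iff_map_prod_eq_prod_map_map hf.aemeasurable hg.aemeasurable).1 hind
  have : {ω | f ω = g ω} = (fun ω => (f ω, g ω)) ⁻¹' {p : ℝ × ℝ | p.1 = p.2} := rfl
  rw [this, ← Measure.map_apply (hf.prodMk hg) hd, hmap, Measure.prod_apply hd]
  have hfib : ∀ x : ℝ, Prod.mk x ⁻¹' {p : ℝ × ℝ | p.1 = p.2} = {x} := by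
    intro x; ext y; simp [eq_comm]
  simp [hfib, @measure_singleton _ _ _ (hatom : NullSingletonClass (Measure.map g P))]

lemma map_cdf_uniform (μ : Measure ℝ) [IsProbabilityMeasure μ] (H : ℝ → ℝ)
    (hH : ∀ x, H x = (μ (Set.Iic x)).toReal) (hcont : Continuous H) :
    Measure.map H μ = volume.restrict (Set.Icc (0 : ℝ) 1) := by
  have hHm : Measurable H := hcont.measurable
  haveI : IsProbabilityMeasure (Measure.map H μ) := Measure.isProbabilityMeasure_map hHm.aemeasurable
  have hmono : Monotone H := by
    intro x y hxy
    rw [hH, hH]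
    exact ENNReal.toReal_mono (measure_ne_top μ _) (measure_mono (Set.Iic_subset_Iic.2 hxy))
  have h0 : ∀ x, 0 ≤ H x := fun x => (hH x) ▸ ENNReal.toReal_nonneg
  have h1 : ∀ x, H x ≤ 1 := by
    intro x
    rw [hH]
    have : μ (Set.Iic x) ≤ 1 := prob_le_one
    calc (μ (Set.Iic x)).toReal ≤ (1 : ℝ≥0∞).toReal :=
          ENNReal.toReal_mono (by norm_num) this
    _ = 1 := by simp
  have hIic : ∀ x, μ (Set.Iic x) = ENNReal.ofReal (H x) := fun x => by
    rw [hH, ENNReal.ofReal_toReal (measure_ne_top μ _)]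
  have htop : Tendsto H atTop (𝓝 1) := by
    have h2 := (ENNReal.tendsto_toReal (by norm_num : (1 : ℝ≥0∞) ≠ ⊤)).comp
      (by simpa [measure_univ] using tendsto_measure_Iic_atTop μ :
        Tendsto (fun x => μ (Set.Iic x)) atTop (𝓝 1))
    rw [ENNReal.toReal_one] at h2
    exact h2.congr fun x => (hH x).symm
  refine Measure.ext_of_Iic (Measure.map H μ) _ (fun t => ?_)
  rw [Measure.map_apply hHm measurableSet_Iic, Measure.restrict_apply measurableSet_Iic]
  rcases lt_or_ge t 0 with ht | ht
  · have hA : H ⁻¹' Set.Iic t = ∅ := by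
      ext x; simp only [Set.mem_preimage, Set.mem_Iic, Set.mem_empty_iff_false, iff_false, not_le]
      exact lt_of_lt_of_le ht (h0 x)
    have hB : Set.Iic t ∩ Set.Icc 0 1 = ∅ := by
      ext x; simp only [Set.mem_inter_iff, Set.mem_Iic, Set.mem_Icc, Set.mem_empty_iff_false,
        iff_false]
      rintro ⟨h1', h2', -⟩; linarith
    rw [hA, hB]
    simp
  rcases lt_or_ge t 1 with ht1 | ht1
  · have hRHS : Set.Iic t ∩ Set.Icc 0 1 = Set.Icc 0 t := by
      ext x
      simp only [Set.mem_inter_iff, Set.mem_Iic, Set.mem_Icc]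
      constructor
      · rintro ⟨hx1, hx2, -⟩; exact ⟨hx2, hx1⟩
      · rintro ⟨hx1, hx2⟩; exact ⟨hx2, hx1, le_trans hx2 ht1.le⟩
    rw [hRHS, Real.volume_Icc, sub_zero]
    obtain ⟨b, hb⟩ : ∃ b, t < H b := (htop.eventually (eventually_gt_nhds ht1)).exists
    refine le_antisymm ?_ ?_
    · rcases (H ⁻¹' Set.Iic t).eq_empty_or_nonempty with hA | hA
      · simp [hA]
      · have hbdd : BddAbove (H ⁻¹' Set.Iic t) := by
          refine ⟨b, fun x hx => ?_⟩
          by_contra hbx; push_neg at hbx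
          exact absurd (le_trans (hmono hbx.le) hx) (not_le.2 hb)
        have hclosed : IsClosed (H ⁻¹' Set.Iic t) := IsClosed.preimage hcont isClosed_Iic
        have hmem : sSup (H ⁻¹' Set.Iic t) ∈ H ⁻¹' Set.Iic t := hclosed.csSup_mem hA hbdd
        calc μ (H ⁻¹' Set.Iic t) ≤ μ (Set.Iic (sSup (H ⁻¹' Set.Iic t))) :=
              measure_mono fun x hx => le_csSup hbdd hx
        _ = ENNReal.ofReal (H (sSup (H ⁻¹' Set.Iic t))) := hIic _
        _ ≤ ENNReal.ofReal t := ENNReal.ofReal_le_ofReal hmem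
    · rcases eq_or_lt_of_le ht with rfl | htpos
      · simp
      · obtain ⟨a, ha⟩ : ∃ a, H a < t := by
          by_contra h'
          push_neg at h'
          have hemp : ⋂ k : ℕ, Set.Iic (-(k : ℝ)) = ∅ := by
            ext x
            simp only [Set.mem_iInter, Set.mem_Iic, Set.mem_empty_iff_false, iff_false, not_forall,
              not_le]
            obtain ⟨k, hk⟩ := exists_nat_gt (-x)
            exact ⟨k, by linarith⟩
          have htend := tendsto_measure_iInter_atTop
            (μ := μ) (s := fun k : ℕ => Set.Iic (-(k : ℝ)))
            (fun k => measurableSet_Iic.nullMeasurableSet)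
            (fun i j hij => Set.Iic_subset_Iic.2 (by exact_mod_cast neg_le_neg (Nat.cast_le.2 hij)))
            ⟨0, measure_ne_top μ _⟩
          rw [hemp, measure_empty] at htend
          have hle : ENNReal.ofReal t ≤ 0 := by
            refine ge_of_tendsto htend (Eventually.of_forall fun k => ?_)
            calc ENNReal.ofReal t ≤ ENNReal.ofReal (H (-(k : ℝ))) :=
                  ENNReal.ofReal_le_ofReal (h' _)
            _ = μ (Set.Iic (-(k : ℝ))) := (hIic _).symm
          exact absurd hle (ENNReal.ofReal_pos.2 htpos).not_ge
        have hab : a ≤ b := by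
          by_contra h'
          push_neg at h'
          exact absurd (hmono h'.le) (not_le.2 (lt_trans ha hb))
        obtain ⟨c, _, hct⟩ := intermediate_value_Icc hab hcont.continuousOn ⟨ha.le, hb.le⟩
        calc ENNReal.ofReal t = μ (Set.Iic c) := by rw [hIic, hct]
        _ ≤ μ (H ⁻¹' Set.Iic t) := measure_mono fun x hx => show H x ≤ t from hct ▸ hmono hx
  · have hA : H ⁻¹' Set.Iic t = Set.univ := by
      ext x; simp only [Set.mem_preimage, Set.mem_Iic, Set.mem_univ, iff_true]
      exact le_trans (h1 x) ht1
    have hB : Set.Iic t ∩ Set.Icc 0 1 = Set.Icc 0 1 :=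
      Set.inter_eq_self_of_subset_right fun x hx => le_trans hx.2 ht1
    rw [hA, hB, measure_univ, Real.volume_Icc]
    norm_num

/-- the averaged two-sample Cramér–von Mises statistic is distribution free:
for i.i.d. `X_i` with continuous cdf `H` and i.i.d. uniform `U_i`, the law of
`W̄_n(X_1,…,X_n)` equals the law of `W̄_n(U_1,…,U_n)`, and
`W̄_n(X_1,…,X_n) = W̄_n(H(X_1),…,H(X_n))` almost surely. -/
theorem cvmWbar_distribution_free
    {Ω : Type*} [MeasurableSpace Ω] {P : Measure Ω} [IsProbabilityMeasure P]
    (X : ℕ → Ω → ℝ) (hXmeas : ∀ i, Measurable (X i))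
    (hXindep : iIndepFun X P)
    (μ : Measure ℝ) (hXlaw : ∀ i, Measure.map (X i) P = μ)
    (H : ℝ → ℝ) (hH : ∀ x, H x = (μ (Set.Iic x)).toReal) (hcont : Continuous H)
    {Ω' : Type*} [MeasurableSpace Ω'] {P' : Measure Ω'} [IsProbabilityMeasure P']
    (U : ℕ → Ω' → ℝ) (hUmeas : ∀ i, Measurable (U i))
    (hUindep : iIndepFun U P')
    (hUlaw : ∀ i, Measure.map (U i) P' = volume.restrict (Set.Icc (0 : ℝ) 1))
    (n : ℕ) :
    Measure.map (fun ω => cvmWbar (fun i => X i ω) n) P =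
      Measure.map (fun ω' => cvmWbar (fun i => U i ω') n) P' ∧
    ∀ᵐ ω ∂P, cvmWbar (fun i => X i ω) n = cvmWbar (fun i => H (X i ω)) n := by
  haveI hμprob : IsProbabilityMeasure μ := by
    rw [← hXlaw 0]; exact Measure.isProbabilityMeasure_map (hXmeas 0).aemeasurable
  have hHm : Measurable H := hcont.measurable
  have hmono : Monotone H := fun x y hxy => by
    rw [hH, hH]
    exact ENNReal.toReal_mono (measure_ne_top μ _) (measure_mono (Set.Iic_subset_Iic.2 hxy))
  have huni : Measure.map H μ = volume.restrict (Set.Icc (0 : ℝ) 1) :=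
    map_cdf_uniform μ H hH hcont
  have hYm : ∀ i, Measurable (fun ω => H (X i ω)) := fun i => hHm.comp (hXmeas i)
  have hYlaw : ∀ i, Measure.map (fun ω => H (X i ω)) P = volume.restrict (Set.Icc (0 : ℝ) 1) := by
    intro i
    rw [show (fun ω => H (X i ω)) = H ∘ X i from rfl, ← Measure.map_map hHm (hXmeas i), hXlaw i,
      huni]
  have hYind : iIndepFun (fun i ω => H (X i ω)) P :=
    hXindep.comp (fun _ => H) fun _ => hHm
  have hne : ∀ i j : ℕ, i ≠ j → ∀ᵐ ω ∂P, H (X i ω) ≠ H (X j ω) := by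
    intro i j hij
    have hind : IndepFun (fun ω => H (X i ω)) (fun ω => H (X j ω)) P :=
      (hXindep.indepFun hij).comp hHm hHm
    have hatom : NoAtoms (Measure.map (fun ω => H (X j ω)) P) := by
      rw [hYlaw j]; exact (inferInstance : NullSingletonClass (volume.restrict (Set.Icc (0 : ℝ) 1)))
    have h0 := indep_eq_null (hYm i) (hYm j) hind hatom
    rw [ae_iff]
    simpa only [ne_eq, not_not] using h0
  have hall : ∀ᵐ ω ∂P, ∀ i j : ℕ, i < n → j < n → i ≠ j → H (X i ω) ≠ H (X j ω) := by
    rw [ae_all_iff]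
    intro i
    rw [ae_all_iff]
    intro j
    by_cases hij : i = j
    · exact Eventually.of_forall fun ω _ _ h => absurd hij h
    · filter_upwards [hne i j hij] with ω hω _ _ _ using hω
  have hae : ∀ᵐ ω ∂P, cvmWbar (fun i => X i ω) n = cvmWbar (fun i => H (X i ω)) n := by
    filter_upwards [hall] with ω hω
    refine cvmWbar_congr fun i hi j hj => ?_
    constructor
    · exact fun h => hmono h
    · intro hle
      by_contra hlt
      push_neg at hlt
      have h2 : H (X j ω) ≤ H (X i ω) := hmono hlt.le
      have heq : H (X i ω) = H (X j ω) := le_antisymm hle h2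
      rcases eq_or_ne i j with rfl | hij
      · exact lt_irrefl _ hlt
      · exact hω i j hi hj hij heq
  refine ⟨?_, hae⟩
  have hmapX : Measure.map (fun ω => cvmWbar (fun i => X i ω) n) P
      = Measure.map (fun ω => cvmWbar (fun i => H (X i ω)) n) P := Measure.map_congr hae
  have hvecY : Measurable (fun ω => fun i : Fin n => H (X (i : ℕ) ω)) :=
    measurable_pi_lambda _ fun i => hYm _
  have hvecU : Measurable (fun ω' => fun i : Fin n => U (i : ℕ) ω') :=
    measurable_pi_lambda _ fun i => hUmeas _
  have e1 : (fun ω => cvmWbar (fun i => H (X i ω)) n)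
      = cvmWbarFin n ∘ (fun ω => fun i : Fin n => H (X (i : ℕ) ω)) :=
    funext fun ω => cvmWbar_eq_fin _ n
  have e2 : (fun ω' => cvmWbar (fun i => U i ω') n)
      = cvmWbarFin n ∘ (fun ω' => fun i : Fin n => U (i : ℕ) ω') :=
    funext fun ω' => cvmWbar_eq_fin _ n
  have hlaws : Measure.map (fun ω => fun i : Fin n => H (X (i : ℕ) ω)) P
      = Measure.map (fun ω' => fun i : Fin n => U (i : ℕ) ω') P' := by
    rw [law_pi (fun i ω => H (X i ω)) hYm hYind n, law_pi U hUmeas hUindep n]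
    simp only [hYlaw, hUlaw]
  rw [hmapX, e1, e2, ← Measure.map_map (measurable_cvmWbarFin n) hvecY,
    ← Measure.map_map (measurable_cvmWbarFin n) hvecU, hlaws]
end
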